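/- Let μ be a tail generating measure and define the μ-tail dependence measure λ_μ(C) = (∫ Λ(·;C) dμ)/(∫ min(u,v) dμ(u,v)) for copulas C admitting a tail dependence function. Then: (i) 0 ≤ λ_μ(C) ≤ 1 for every such C; (ii) λ_μ(Π) = 0 and λ_μ(M) = 1, where Π(u,v) = uv and M(u,v) = min(u,v); and (iii) for copulas C, C' admitting tail dependence functions and t ∈ [0,1], the convex combination tC + (1−t)C' is a copula admitting the tail dependence function tΛ(·;C) + (1−t)Λ(·;C'), and λ_μ(tC + (1−t)C') = t·λ_μ(C) + (1−t)·λ_μ(C'). -/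

import Mathlib

open MeasureTheory Filter Set

/-- A bivariate copula: `C : [0,1]² → [0,1]` with the grounded/marginal conditions and
the 2-increasing property. -/
def IsCopula (C : ℝ → ℝ → ℝ) : Prop :=
  (∀ u ∈ Icc (0:ℝ) 1, ∀ v ∈ Icc (0:ℝ) 1, C u v ∈ Icc (0:ℝ) 1) ∧
  (∀ u ∈ Icc (0:ℝ) 1, C u 0 = 0 ∧ C 0 u = 0 ∧ C u 1 = u ∧ C 1 u = u) ∧
  (∀ u u' v v' : ℝ, u ∈ Icc (0:ℝ) 1 → u' ∈ Icc (0:ℝ) 1 →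
    v ∈ Icc (0:ℝ) 1 → v' ∈ Icc (0:ℝ) 1 → u ≤ u' → v ≤ v' →
    0 ≤ C u' v' - C u' v - C u v' + C u v)

/-- `Λ` is the tail dependence function of `C`:
`Λ(u,v) = lim_{p↓0} C(pu,pv)/p` for every `(u,v) ∈ [0,∞)²`. -/
def HasTDF (C Λ : ℝ → ℝ → ℝ) : Prop :=
  ∀ u v : ℝ, 0 ≤ u → 0 ≤ v →
    Tendsto (fun p : ℝ => C (p * u) (p * v) / p)
      (nhdsWithin (0:ℝ) (Ioi 0)) (nhds (Λ u v))

/-- A tail generating measure: a Borel probability measure on `[0,1]²` whose mass is not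
concentrated on `{u = 0} ∪ {v = 0}`. -/
def IsTailGenMeasure (μ : Measure (ℝ × ℝ)) : Prop :=
  IsProbabilityMeasure μ ∧
  μ ((Icc (0:ℝ) 1 ×ˢ Icc (0:ℝ) 1)ᶜ) = 0 ∧
  μ {q : ℝ × ℝ | q.1 = 0 ∨ q.2 = 0} < 1

/-- The μ-tail dependence measure: `λ_μ = (∫ Λ dμ) / (∫ min dμ)`, applied to
the tail dependence function `Λ` of the copula. -/
noncomputable def tdm (Λ : ℝ → ℝ → ℝ) (μ : Measure (ℝ × ℝ)) : ℝ :=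
  (∫ q, Λ q.1 q.2 ∂μ) / (∫ q : ℝ × ℝ, min q.1 q.2 ∂μ)

lemma copula_incr_left {C : ℝ → ℝ → ℝ} (hC : IsCopula C) {u u' v : ℝ}
    (hu : u ∈ Icc (0:ℝ) 1) (hu' : u' ∈ Icc (0:ℝ) 1) (hv : v ∈ Icc (0:ℝ) 1)
    (h : u ≤ u') : C u v ≤ C u' v ∧ C u' v - C u v ≤ u' - u := by
  obtain ⟨_, hb, h2⟩ := hC
  have h01 : (0:ℝ) ∈ Icc (0:ℝ) 1 := ⟨le_refl 0, zero_le_one⟩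
  have h11 : (1:ℝ) ∈ Icc (0:ℝ) 1 := ⟨zero_le_one, le_refl 1⟩
  constructor
  · have h3 := h2 u u' 0 v hu hu' h01 hv h hv.1
    have e1 := (hb u' hu').1
    have e2 := (hb u hu).1
    linarith
  · have h3 := h2 u u' v 1 hu hu' hv h11 h hv.2
    have e1 := (hb u' hu').2.2.1
    have e2 := (hb u hu).2.2.1
    linarith

lemma copula_incr_right {C : ℝ → ℝ → ℝ} (hC : IsCopula C) {u v v' : ℝ}
    (hu : u ∈ Icc (0:ℝ) 1) (hv : v ∈ Icc (0:ℝ) 1) (hv' : v' ∈ Icc (0:ℝ) 1)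
    (h : v ≤ v') : C u v ≤ C u v' ∧ C u v' - C u v ≤ v' - v := by
  obtain ⟨_, hb, h2⟩ := hC
  have h01 : (0:ℝ) ∈ Icc (0:ℝ) 1 := ⟨le_refl 0, zero_le_one⟩
  have h11 : (1:ℝ) ∈ Icc (0:ℝ) 1 := ⟨zero_le_one, le_refl 1⟩
  constructor
  · have h3 := h2 0 u v v' h01 hu hv hv' hu.1 h
    have e1 := (hb v' hv').2.1
    have e2 := (hb v hv).2.1
    linarith
  · have h3 := h2 u 1 v v' hu h11 hv hv' hu.2 h
    have e1 := (hb v' hv').2.2.2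
    have e2 := (hb v hv).2.2.2
    linarith

lemma copula_bounds {C : ℝ → ℝ → ℝ} (hC : IsCopula C) {u v : ℝ}
    (hu : u ∈ Icc (0:ℝ) 1) (hv : v ∈ Icc (0:ℝ) 1) :
    0 ≤ C u v ∧ C u v ≤ min u v := by
  have h01 : (0:ℝ) ∈ Icc (0:ℝ) 1 := ⟨le_refl 0, zero_le_one⟩
  have h11 : (1:ℝ) ∈ Icc (0:ℝ) 1 := ⟨zero_le_one, le_refl 1⟩
  have hb := hC.2.1
  have l1 := (copula_incr_left hC h01 hu hv hu.1).1
  have l2 := (copula_incr_left hC hu h11 hv hu.2).1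
  have l3 := (copula_incr_right hC hu hv h11 hv.2).1
  have e1 := (hb v hv).2.1
  have e2 := (hb v hv).2.2.2
  have e3 := (hb u hu).2.2.1
  refine ⟨by linarith, le_min (by linarith) (by linarith)⟩

lemma copula_lip {C : ℝ → ℝ → ℝ} (hC : IsCopula C) {u u' v v' : ℝ}
    (hu : u ∈ Icc (0:ℝ) 1) (hu' : u' ∈ Icc (0:ℝ) 1)
    (hv : v ∈ Icc (0:ℝ) 1) (hv' : v' ∈ Icc (0:ℝ) 1) :
    |C u' v' - C u v| ≤ |u' - u| + |v' - v| := by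
  have step1 : |C u' v' - C u v'| ≤ |u' - u| := by
    rcases le_total u u' with h | h
    · have := copula_incr_left hC hu hu' hv' h
      rw [abs_of_nonneg (by linarith), abs_of_nonneg (by linarith)]; linarith
    · have := copula_incr_left hC hu' hu hv' h
      rw [abs_of_nonpos (by linarith), abs_of_nonpos (by linarith)]; linarith
  have step2 : |C u v' - C u v| ≤ |v' - v| := by
    rcases le_total v v' with h | h
    · have := copula_incr_right hC hu hv hv' h
      rw [abs_of_nonneg (by linarith), abs_of_nonneg (by linarith)]; linarith
    · have := copula_incr_right hC hu hv' hv h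
      rw [abs_of_nonpos (by linarith), abs_of_nonpos (by linarith)]; linarith
  calc |C u' v' - C u v| = |(C u' v' - C u v') + (C u v' - C u v)| := by ring_nf
    _ ≤ |C u' v' - C u v'| + |C u v' - C u v| := abs_add_le _ _
    _ ≤ |u' - u| + |v' - v| := add_le_add step1 step2

lemma copula_contOn {C : ℝ → ℝ → ℝ} (hC : IsCopula C) :
    ContinuousOn (fun q : ℝ × ℝ => C q.1 q.2) (Icc (0:ℝ) 1 ×ˢ Icc (0:ℝ) 1) := by
  have : LipschitzOnWith 2 (fun q : ℝ × ℝ => C q.1 q.2) (Icc (0:ℝ) 1 ×ˢ Icc (0:ℝ) 1) := by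
    rw [lipschitzOnWith_iff_dist_le_mul]
    intro p hp q hq
    have h1 := copula_lip hC hq.1 hp.1 hq.2 hp.2
    have hd1 : |p.1 - q.1| ≤ dist p q := by
      rw [← Real.dist_eq, Prod.dist_eq]; exact le_max_left _ _
    have hd2 : |p.2 - q.2| ≤ dist p q := by
      rw [← Real.dist_eq, Prod.dist_eq]; exact le_max_right _ _
    rw [Real.dist_eq]
    push_cast
    linarith
  exact this.continuousOn

lemma tdf_bounds {C Λ : ℝ → ℝ → ℝ} (hC : IsCopula C) (hT : HasTDF C Λ) {u v : ℝ}
    (hu : u ∈ Icc (0:ℝ) 1) (hv : v ∈ Icc (0:ℝ) 1) :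
    0 ≤ Λ u v ∧ Λ u v ≤ min u v := by
  have hev : ∀ᶠ p in nhdsWithin (0:ℝ) (Ioi 0),
      0 ≤ C (p * u) (p * v) / p ∧ C (p * u) (p * v) / p ≤ min u v := by
    have h1 : Ioc (0:ℝ) 1 ∈ nhdsWithin (0:ℝ) (Ioi 0) := by
      rw [mem_nhdsWithin]
      exact ⟨Iio 1, isOpen_Iio, by norm_num, fun p hp => ⟨hp.2, le_of_lt hp.1⟩⟩
    filter_upwards [h1] with p hp
    have hp0 : 0 < p := hp.1
    have hpu : p * u ∈ Icc (0:ℝ) 1 := ⟨mul_nonneg hp0.le hu.1,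
      le_trans (mul_le_mul hp.2 hu.2 hu.1 zero_le_one) (by norm_num)⟩
    have hpv : p * v ∈ Icc (0:ℝ) 1 := ⟨mul_nonneg hp0.le hv.1,
      le_trans (mul_le_mul hp.2 hv.2 hv.1 zero_le_one) (by norm_num)⟩
    obtain ⟨hb0, hb1⟩ := copula_bounds hC hpu hpv
    constructor
    · exact div_nonneg hb0 hp0.le
    · rw [div_le_iff₀ hp0]
      have : min (p * u) (p * v) = min u v * p := by
        rcases le_total u v with h | h
        · rw [min_eq_left h, min_eq_left (by nlinarith)]; ring
        · rw [min_eq_right h, min_eq_right (by nlinarith)]; ring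
      linarith [hb1, this ▸ hb1]
  constructor
  · exact ge_of_tendsto (hT u v hu.1 hv.1) (hev.mono fun p hp => hp.1)
  · exact le_of_tendsto (hT u v hu.1 hv.1) (hev.mono fun p hp => hp.2)

lemma tgm_ae_box {μ : Measure (ℝ × ℝ)} (hμ : IsTailGenMeasure μ) :
    ∀ᵐ q ∂μ, q.1 ∈ Icc (0:ℝ) 1 ∧ q.2 ∈ Icc (0:ℝ) 1 := by
  rw [ae_iff]
  have he : {q : ℝ × ℝ | ¬(q.1 ∈ Icc (0:ℝ) 1 ∧ q.2 ∈ Icc (0:ℝ) 1)}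
      = (Icc (0:ℝ) 1 ×ˢ Icc (0:ℝ) 1)ᶜ := rfl
  rw [he]; exact hμ.2.1

lemma tdf_aesm {C Λ : ℝ → ℝ → ℝ} {μ : Measure (ℝ × ℝ)} (hμ : IsTailGenMeasure μ)
    (hC : IsCopula C) (hT : HasTDF C Λ) :
    AEStronglyMeasurable (fun q : ℝ × ℝ => Λ q.1 q.2) μ := by
  set clamp : ℝ → ℝ := fun x => max 0 (min x 1) with hclamp
  have hclampc : Continuous clamp := continuous_const.max (continuous_id.min continuous_const)
  have hclampmem : ∀ x : ℝ, clamp x ∈ Icc (0:ℝ) 1 :=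
    fun x => ⟨le_max_left _ _, max_le (by norm_num) (min_le_right _ _)⟩
  set g : ℕ → ℝ × ℝ → ℝ := fun n q =>
    C ((1 / (n + 1 : ℝ)) * clamp q.1) ((1 / (n + 1 : ℝ)) * clamp q.2) / (1 / (n + 1 : ℝ)) with hg
  have hgc : ∀ n, Continuous (g n) := by
    intro n
    have hpn : (0:ℝ) < 1 / (n + 1 : ℝ) := by positivity
    have hpn1 : (1:ℝ) / (n + 1 : ℝ) ≤ 1 := by
      rw [div_le_one (by positivity)]; linarith [Nat.cast_nonneg (α := ℝ) n]
    have hmap : ∀ q : ℝ × ℝ,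
        ((1 / (n + 1 : ℝ)) * clamp q.1, (1 / (n + 1 : ℝ)) * clamp q.2)
          ∈ Icc (0:ℝ) 1 ×ˢ Icc (0:ℝ) 1 := by
      intro q
      constructor
      · exact ⟨mul_nonneg hpn.le (hclampmem q.1).1,
          le_trans (mul_le_mul hpn1 (hclampmem q.1).2 (hclampmem q.1).1 zero_le_one) (by norm_num)⟩
      · exact ⟨mul_nonneg hpn.le (hclampmem q.2).1,
          le_trans (mul_le_mul hpn1 (hclampmem q.2).2 (hclampmem q.2).1 zero_le_one) (by norm_num)⟩
    have hin : Continuous (fun q : ℝ × ℝ =>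
        ((1 / (n + 1 : ℝ)) * clamp q.1, (1 / (n + 1 : ℝ)) * clamp q.2)) :=
      ((continuous_const.mul (hclampc.comp continuous_fst)).prodMk
        (continuous_const.mul (hclampc.comp continuous_snd)))
    exact ((copula_contOn hC).comp_continuous hin hmap).div_const _
  have hptends : Tendsto (fun n : ℕ => 1 / (n + 1 : ℝ)) atTop (nhdsWithin 0 (Ioi 0)) := by
    apply tendsto_nhdsWithin_of_tendsto_nhds_of_eventually_within
    · exact tendsto_one_div_add_atTop_nhds_zero_nat
    · exact Eventually.of_forall fun n => mem_Ioi.mpr (by positivity)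
  have hlim : ∀ᵐ q ∂μ, Tendsto (fun n => g n q) atTop (nhds (Λ q.1 q.2)) := by
    filter_upwards [tgm_ae_box hμ] with q hq
    have h1 : clamp q.1 = q.1 := by
      rw [hclamp]; dsimp only
      rw [min_eq_left hq.1.2, max_eq_right hq.1.1]
    have h2 : clamp q.2 = q.2 := by
      rw [hclamp]; dsimp only
      rw [min_eq_left hq.2.2, max_eq_right hq.2.1]
    have htend := (hT q.1 q.2 hq.1.1 hq.2.1).comp hptends
    refine htend.congr fun n => ?_
    simp only [hg, Function.comp_apply, h1, h2]
  exact aestronglyMeasurable_of_tendsto_ae atTop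
    (fun n => (hgc n).aestronglyMeasurable) hlim

lemma tdf_integrable {C Λ : ℝ → ℝ → ℝ} {μ : Measure (ℝ × ℝ)} (hμ : IsTailGenMeasure μ)
    (hC : IsCopula C) (hT : HasTDF C Λ) :
    Integrable (fun q : ℝ × ℝ => Λ q.1 q.2) μ := by
  haveI := hμ.1
  refine ⟨tdf_aesm hμ hC hT, ?_⟩
  apply HasFiniteIntegral.of_bounded (C := 1)
  filter_upwards [tgm_ae_box hμ] with q hq
  obtain ⟨h0, h1⟩ := tdf_bounds hC hT hq.1 hq.2
  rw [Real.norm_eq_abs, abs_of_nonneg h0]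
  exact le_trans h1 (le_trans (min_le_left _ _) hq.1.2)

lemma min_integrable {μ : Measure (ℝ × ℝ)} (hμ : IsTailGenMeasure μ) :
    Integrable (fun q : ℝ × ℝ => min q.1 q.2) μ := by
  haveI := hμ.1
  refine ⟨(continuous_fst.min continuous_snd).aestronglyMeasurable, ?_⟩
  apply HasFiniteIntegral.of_bounded (C := 1)
  filter_upwards [tgm_ae_box hμ] with q hq
  rw [Real.norm_eq_abs, abs_of_nonneg (le_min hq.1.1 hq.2.1)]
  exact le_trans (min_le_left _ _) hq.1.2

lemma min_integral_pos {μ : Measure (ℝ × ℝ)} (hμ : IsTailGenMeasure μ) :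
    0 < ∫ q : ℝ × ℝ, min q.1 q.2 ∂μ := by
  haveI := hμ.1
  have hnn : 0 ≤ᵐ[μ] fun q : ℝ × ℝ => min q.1 q.2 :=
    (tgm_ae_box hμ).mono fun q hq => le_min hq.1.1 hq.2.1
  have hint := min_integrable hμ
  rcases lt_or_eq_of_le (integral_nonneg_of_ae hnn) with h | h
  · exact h
  exfalso
  have hz : (fun q : ℝ × ℝ => min q.1 q.2) =ᵐ[μ] 0 :=
    (integral_eq_zero_iff_of_nonneg_ae hnn hint).mp h.symm
  have hax : ∀ᵐ q ∂μ, q.1 = 0 ∨ q.2 = 0 := by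
    filter_upwards [hz, tgm_ae_box hμ] with q hq hbox
    have hq' : min q.1 q.2 = 0 := hq
    rcases le_total q.1 q.2 with h' | h'
    · left; rwa [min_eq_left h'] at hq'
    · right; rwa [min_eq_right h'] at hq'
  have hS : MeasurableSet {q : ℝ × ℝ | q.1 = 0 ∨ q.2 = 0} := by
    have : {q : ℝ × ℝ | q.1 = 0 ∨ q.2 = 0} =
        (Prod.fst ⁻¹' {0}) ∪ (Prod.snd ⁻¹' {0}) := rfl
    rw [this]
    exact (measurable_fst (measurableSet_singleton 0)).union
      (measurable_snd (measurableSet_singleton 0))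
  have hcompl : μ ({q : ℝ × ℝ | q.1 = 0 ∨ q.2 = 0})ᶜ = 0 := by
    rw [ae_iff] at hax; exact hax
  have h1 := measure_add_measure_compl (μ := μ) hS
  rw [hcompl, add_zero, measure_univ] at h1
  exact absurd h1 (ne_of_lt hμ.2.2)

theorem tdm_basic_properties (μ : Measure (ℝ × ℝ)) (hμ : IsTailGenMeasure μ) :
    (∀ C Λ : ℝ → ℝ → ℝ, IsCopula C → HasTDF C Λ → 0 ≤ tdm Λ μ ∧ tdm Λ μ ≤ 1) ∧
    (∀ Λpi : ℝ → ℝ → ℝ, HasTDF (fun u v => u * v) Λpi → tdm Λpi μ = 0) ∧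
    (∀ Λmin : ℝ → ℝ → ℝ, HasTDF (fun u v => min u v) Λmin → tdm Λmin μ = 1) ∧
    (∀ (C C' Λ Λ' : ℝ → ℝ → ℝ) (t : ℝ), IsCopula C → IsCopula C' →
      HasTDF C Λ → HasTDF C' Λ' → t ∈ Icc (0:ℝ) 1 →
      IsCopula (fun u v => t * C u v + (1 - t) * C' u v) ∧
      HasTDF (fun u v => t * C u v + (1 - t) * C' u v)
        (fun u v => t * Λ u v + (1 - t) * Λ' u v) ∧
      tdm (fun u v => t * Λ u v + (1 - t) * Λ' u v) μ
        = t * tdm Λ μ + (1 - t) * tdm Λ' μ) := by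
  have hDpos := min_integral_pos hμ
  refine ⟨?_, ?_, ?_, ?_⟩
  · -- (i) bounds
    intro C Λ hC hT
    have hint := tdf_integrable hμ hC hT
    have hnn : 0 ≤ ∫ q, Λ q.1 q.2 ∂μ := integral_nonneg_of_ae <|
      (tgm_ae_box hμ).mono fun q hq => (tdf_bounds hC hT hq.1 hq.2).1
    have hle : ∫ q, Λ q.1 q.2 ∂μ ≤ ∫ q : ℝ × ℝ, min q.1 q.2 ∂μ :=
      integral_mono_ae hint (min_integrable hμ) <|
        (tgm_ae_box hμ).mono fun q hq => (tdf_bounds hC hT hq.1 hq.2).2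
    exact ⟨div_nonneg hnn hDpos.le, (div_le_one hDpos).mpr hle⟩
  · -- (ii) Π
    intro Λpi hT
    have hzero : ∀ u v : ℝ, 0 ≤ u → 0 ≤ v → Λpi u v = 0 := by
      intro u v hu hv
      have h1 : Tendsto (fun p : ℝ => (p * u) * (p * v) / p)
          (nhdsWithin (0:ℝ) (Ioi 0)) (nhds 0) := by
        have : (fun p : ℝ => (p * u) * (p * v) / p) = fun p : ℝ => p * (u * v) := by
          funext p
          rcases eq_or_ne p 0 with h | h
          · simp [h]
          · field_simp
        rw [this]
        have h0 : Tendsto (fun p : ℝ => p * (u * v)) (nhds (0:ℝ)) (nhds (0 * (u * v))) :=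
          tendsto_id.mul_const _
        rw [zero_mul] at h0
        exact h0.mono_left nhdsWithin_le_nhds
      exact tendsto_nhds_unique (hT u v hu hv) h1
    have : ∫ q, Λpi q.1 q.2 ∂μ = 0 := by
      rw [integral_congr_ae ((tgm_ae_box hμ).mono fun q hq => hzero q.1 q.2 hq.1.1 hq.2.1)]
      simp
    rw [tdm, this, zero_div]
  · -- (ii) M
    intro Λmin hT
    have heq : ∀ u v : ℝ, 0 ≤ u → 0 ≤ v → Λmin u v = min u v := by
      intro u v hu hv
      have h1 : Tendsto (fun p : ℝ => min (p * u) (p * v) / p)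
          (nhdsWithin (0:ℝ) (Ioi 0)) (nhds (min u v)) := by
        apply Tendsto.congr' _ tendsto_const_nhds
        filter_upwards [self_mem_nhdsWithin] with p (hp : p ∈ Ioi (0:ℝ))
        have hp0 : (0:ℝ) < p := hp
        have : min (p * u) (p * v) = p * min u v := by
          rcases le_total u v with h | h
          · rw [min_eq_left h, min_eq_left (by nlinarith)]
          · rw [min_eq_right h, min_eq_right (by nlinarith)]
        rw [this, mul_comm, mul_div_assoc, div_self hp0.ne', mul_one]
      exact tendsto_nhds_unique (hT u v hu hv) h1
    have : ∫ q, Λmin q.1 q.2 ∂μ = ∫ q : ℝ × ℝ, min q.1 q.2 ∂μ :=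
      integral_congr_ae ((tgm_ae_box hμ).mono fun q hq => heq q.1 q.2 hq.1.1 hq.2.1)
    rw [tdm, this, div_self hDpos.ne']
  · -- (iii) convexity
    intro C C' Λ Λ' t hC hC' hT hT' ht
    have hcop : IsCopula (fun u v => t * C u v + (1 - t) * C' u v) := by
      obtain ⟨hm, hb, h2⟩ := hC
      obtain ⟨hm', hb', h2'⟩ := hC'
      refine ⟨?_, ?_, ?_⟩
      · intro u hu v hv
        obtain ⟨a1, a2⟩ := hm u hu v hv
        obtain ⟨b1, b2⟩ := hm' u hu v hv
        have h1t : (0:ℝ) ≤ 1 - t := by linarith [ht.2]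
        constructor
        · show (0:ℝ) ≤ t * C u v + (1 - t) * C' u v
          nlinarith [mul_nonneg ht.1 a1, mul_nonneg h1t b1]
        · show t * C u v + (1 - t) * C' u v ≤ 1
          nlinarith [mul_le_mul_of_nonneg_left a2 ht.1, mul_le_mul_of_nonneg_left b2 h1t]
      · intro u hu
        obtain ⟨a1, a2, a3, a4⟩ := hb u hu
        obtain ⟨b1, b2, b3, b4⟩ := hb' u hu
        refine ⟨?_, ?_, ?_, ?_⟩
        · show t * C u 0 + (1 - t) * C' u 0 = 0; rw [a1, b1]; ring
        · show t * C 0 u + (1 - t) * C' 0 u = 0; rw [a2, b2]; ring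
        · show t * C u 1 + (1 - t) * C' u 1 = u; rw [a3, b3]; ring
        · show t * C 1 u + (1 - t) * C' 1 u = u; rw [a4, b4]; ring
      · intro u u' v v' hu hu' hv hv' hle1 hle2
        have ha := h2 u u' v v' hu hu' hv hv' hle1 hle2
        have hb2 := h2' u u' v v' hu hu' hv hv' hle1 hle2
        have h1t : (0:ℝ) ≤ 1 - t := by linarith [ht.2]
        show (0:ℝ) ≤ (t * C u' v' + (1 - t) * C' u' v') - (t * C u' v + (1 - t) * C' u' v)
          - (t * C u v' + (1 - t) * C' u v') + (t * C u v + (1 - t) * C' u v)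
        nlinarith [mul_nonneg ht.1 ha, mul_nonneg h1t hb2]
    have htdf : HasTDF (fun u v => t * C u v + (1 - t) * C' u v)
        (fun u v => t * Λ u v + (1 - t) * Λ' u v) := by
      intro u v hu hv
      have := ((hT u v hu hv).const_mul t).add ((hT' u v hu hv).const_mul (1 - t))
      refine Tendsto.congr (fun p => ?_) this
      rw [add_div, mul_div_assoc, mul_div_assoc]
    refine ⟨hcop, htdf, ?_⟩
    have hi := tdf_integrable hμ hC hT
    have hi' := tdf_integrable hμ hC' hT'
    have : ∫ q, (t * Λ q.1 q.2 + (1 - t) * Λ' q.1 q.2) ∂μ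
        = t * ∫ q, Λ q.1 q.2 ∂μ + (1 - t) * ∫ q, Λ' q.1 q.2 ∂μ := by
      rw [integral_add (hi.const_mul t) (hi'.const_mul (1 - t)),
        integral_const_mul, integral_const_mul]
    rw [tdm, tdm, tdm, this, add_div, mul_div_assoc, mul_div_assoc]
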